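/- For every n ≥ 1, V_{3,n} ≤ 4 V₁, where V_{3,n} = Σ_a E[ 1{n(a)>0} · n/n(a) − 1/π_D(a) ] · π(a)² σ²_Φ(a) and V₁ = Σ_a π(a)² σ²_Φ(a)/π_D(a). Moreover, if n · min_a π_D(a) ≥ 34, then V_{3,n} ≤ 2 V₁ · √(2/(n π_D*)) · ( √((3/2) ln(n π_D*/2)) + 1 ), where π_D* = min_a π_D(a). -/

import Mathlib

open MeasureTheory ENNReal

noncomputable section

namespace OffPolicy

variable {K : ℕ}

/-- `π` is a probability mass function on the action set. -/
def IsPolicy (π : Fin K → ℝ) : Prop := (∀ a, 0 ≤ π a) ∧ ∑ a, π a = 1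

/-- A behavior policy: a pmf with everywhere positive probabilities. -/
def IsBehaviorPolicy (πD : Fin K → ℝ) : Prop := (∀ a, 0 < πD a) ∧ ∑ a, πD a = 1

/-- The distribution of a single action `A ~ π_D`. -/
def actionMeasure (πD : Fin K → ℝ) : Measure (Fin K) :=
  ∑ a : Fin K, (πD a).toNNReal • Measure.dirac a

instance actionMeasure_finite (πD : Fin K → ℝ) : IsFiniteMeasure (actionMeasure πD) := by
  unfold actionMeasure; infer_instance

/-- The distribution of the i.i.d. actions `A_1, …, A_n`. -/
def actionData (n : ℕ) (πD : Fin K → ℝ) : Measure (Fin n → Fin K) :=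
  Measure.pi fun _ => actionMeasure πD

/-- `n(a) = #{i : A_i = a}`. -/
def cntA (n : ℕ) (d : Fin n → Fin K) (a : Fin K) : ℕ :=
  (Finset.univ.filter fun i => d i = a).card

lemma actionMeasure_singleton {K : ℕ} (πD : Fin K → ℝ) (b : Fin K) :
    actionMeasure πD {b} = ((πD b).toNNReal : ℝ≥0∞) := by
  rw [actionMeasure, Measure.finset_sum_apply]
  simp [Measure.dirac_apply' _ (measurableSet_singleton b), Set.indicator_apply]

lemma actionData_singleton {K n : ℕ} (πD : Fin K → ℝ) (d : Fin n → Fin K) :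
    (actionData n πD) {d} = ∏ i, ((πD (d i)).toNNReal : ℝ≥0∞) := by
  rw [actionData, ← Set.univ_pi_singleton, Measure.pi_pi]
  exact Finset.prod_congr rfl fun i _ => actionMeasure_singleton πD (d i)

lemma integral_actionData {K n : ℕ} (πD : Fin K → ℝ) (h0 : ∀ a, 0 ≤ πD a)
    (F : (Fin n → Fin K) → ℝ) :
    ∫ d, F d ∂(actionData n πD) = ∑ d : Fin n → Fin K, (∏ i, πD (d i)) * F d := by
  haveI : IsFiniteMeasure (actionData n πD) := by unfold actionData; infer_instance
  rw [integral_fintype (Integrable.of_finite)]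
  refine Finset.sum_congr rfl fun d _ => ?_
  rw [Measure.real, actionData_singleton, smul_eq_mul]
  congr 1
  rw [ENNReal.toReal_prod]
  exact Finset.prod_congr rfl fun i _ => by
    rw [ENNReal.coe_toReal, Real.coe_toNNReal _ (h0 _)]

lemma cntA_cons {K : ℕ} (n : ℕ) (b : Fin K) (d : Fin n → Fin K) (a : Fin K) :
    cntA (n + 1) (Fin.cons b d) a = cntA n d a + (if b = a then 1 else 0) := by
  unfold cntA
  rw [Finset.card_filter, Finset.card_filter, Fin.sum_univ_succ]
  simp [Fin.cons_zero, Fin.cons_succ, Nat.add_comm]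

lemma binrec (p q : ℝ) (n : ℕ) (g : ℕ → ℝ) :
    ∑ k ∈ Finset.range (n + 2), (((n+1).choose k : ℝ)) * p ^ k * q ^ (n + 1 - k) * g k
      = p * ∑ k ∈ Finset.range (n + 1), ((n.choose k : ℝ)) * p ^ k * q ^ (n - k) * g (k + 1)
        + q * ∑ k ∈ Finset.range (n + 1), ((n.choose k : ℝ)) * p ^ k * q ^ (n - k) * g k := by
  rw [Finset.sum_range_succ'
    (fun k => (((n+1).choose k : ℝ)) * p ^ k * q ^ (n + 1 - k) * g k) (n + 1)]
  have h1 : ∑ k ∈ Finset.range (n+1), (((n+1).choose (k+1) : ℝ)) * p ^ (k+1) * q ^ (n+1-(k+1)) * g (k+1)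
      = ∑ k ∈ Finset.range (n+1),
          (p * (((n.choose k : ℝ)) * p ^ k * q ^ (n - k) * g (k+1))
            + ((n.choose (k+1) : ℝ)) * p ^ (k+1) * q ^ (n - k) * g (k+1)) := by
    refine Finset.sum_congr rfl fun k hk => ?_
    have hnk : n + 1 - (k + 1) = n - k := by omega
    rw [hnk, Nat.choose_succ_succ', Nat.cast_add]; ring
  rw [h1, Finset.sum_add_distrib, ← Finset.mul_sum]
  have h2 : ∑ k ∈ Finset.range (n+1), ((n.choose (k+1) : ℝ)) * p ^ (k+1) * q ^ (n - k) * g (k+1)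
        + (((n+1).choose 0 : ℝ)) * p ^ 0 * q ^ (n + 1 - 0) * g 0
      = q * ∑ k ∈ Finset.range (n+1), ((n.choose k : ℝ)) * p ^ k * q ^ (n - k) * g k := by
    rw [Finset.sum_range_succ
      (fun k => ((n.choose (k+1) : ℝ)) * p ^ (k+1) * q ^ (n - k) * g (k+1)) n]
    rw [Finset.sum_range_succ' (fun k => ((n.choose k : ℝ)) * p ^ k * q ^ (n - k) * g k) n]
    rw [Nat.choose_succ_self, mul_add, Finset.mul_sum]
    have h3 : ∀ k ∈ Finset.range n,
        ((n.choose (k+1) : ℝ)) * p ^ (k+1) * q ^ (n - k) * g (k+1)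
          = q * (((n.choose (k+1) : ℝ)) * p ^ (k+1) * q ^ (n - (k+1)) * g (k+1)) := by
      intro k hk
      have hk' : k < n := Finset.mem_range.mp hk
      have : n - k = (n - (k+1)) + 1 := by omega
      rw [this, pow_succ]; ring
    rw [Finset.sum_congr rfl h3]
    have : n + 1 - 0 = (n - 0) + 1 := by omega
    rw [this, pow_succ q (n - 0)]
    simp only [Nat.choose_zero_right, Nat.cast_one, Nat.cast_zero, pow_zero]
    ring
  rw [← h2]
  ring

lemma sum_prod_count {K : ℕ} (w : Fin K → ℝ) (a : Fin K) :
    ∀ (n : ℕ) (g : ℕ → ℝ),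
      ∑ d : Fin n → Fin K, (∏ i, w (d i)) * g (cntA n d a)
        = ∑ k ∈ Finset.range (n + 1),
            ((n.choose k : ℝ)) * (w a) ^ k * (∑ b ∈ Finset.univ.erase a, w b) ^ (n - k) * g k := by
  intro n
  induction n with
  | zero =>
      intro g
      rw [Finset.univ_unique, Finset.sum_singleton]
      simp [cntA]
  | succ n ih =>
      intro g
      have e1 : (∑ d : Fin (n+1) → Fin K, (∏ i, w (d i)) * g (cntA (n+1) d a))
          = ∑ b : Fin K, ∑ d : Fin n → Fin K,
              (w b * ∏ i, w (d i)) * g (cntA n d a + (if b = a then 1 else 0)) := by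
        rw [← Equiv.sum_comp (Fin.consEquiv fun _ => Fin K)
            (fun d => (∏ i, w (d i)) * g (cntA (n+1) d a)), Fintype.sum_prod_type]
        refine Finset.sum_congr rfl fun b _ => Finset.sum_congr rfl fun d _ => ?_
        rw [show (Fin.consEquiv fun _ => Fin K) (b, d) = Fin.cons b d from rfl,
          cntA_cons, Fin.prod_univ_succ]
        simp [Fin.cons_zero, Fin.cons_succ]
      rw [e1, ← Finset.add_sum_erase _ _ (Finset.mem_univ a)]
      have ea : ∑ d : Fin n → Fin K,
            (w a * ∏ i, w (d i)) * g (cntA n d a + (if a = a then 1 else 0))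
          = w a * ∑ k ∈ Finset.range (n+1),
              ((n.choose k : ℝ)) * (w a) ^ k * (∑ b ∈ Finset.univ.erase a, w b) ^ (n-k) * g (k+1) := by
        rw [← ih (fun k => g (k + 1)), Finset.mul_sum]
        refine Finset.sum_congr rfl fun d _ => ?_
        rw [if_pos rfl]; ring
      have eb : ∑ b ∈ Finset.univ.erase a, ∑ d : Fin n → Fin K,
            (w b * ∏ i, w (d i)) * g (cntA n d a + (if b = a then 1 else 0))
          = (∑ b ∈ Finset.univ.erase a, w b) * ∑ k ∈ Finset.range (n+1),
              ((n.choose k : ℝ)) * (w a) ^ k * (∑ b ∈ Finset.univ.erase a, w b) ^ (n-k) * g k := by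
        rw [Finset.sum_mul]
        refine Finset.sum_congr rfl fun b hb => ?_
        have hba : b ≠ a := (Finset.mem_erase.mp hb).1
        rw [← ih g, Finset.mul_sum]
        refine Finset.sum_congr rfl fun d _ => ?_
        rw [if_neg hba, Nat.add_zero]; ring
      rw [ea, eb, binrec]

lemma sum_binom_total (n : ℕ) (p q : ℝ) (hpq : p + q = 1) :
    ∑ k ∈ Finset.range (n + 1), ((n.choose k : ℝ)) * p ^ k * q ^ (n - k) = 1 := by
  have h := add_pow p q n
  rw [hpq, one_pow] at h
  calc ∑ k ∈ Finset.range (n + 1), ((n.choose k : ℝ)) * p ^ k * q ^ (n - k)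
      = ∑ k ∈ Finset.range (n + 1), p ^ k * q ^ (n - k) * (n.choose k : ℝ) :=
        Finset.sum_congr rfl fun k _ => by ring
    _ = 1 := h.symm

lemma sum_binom_div_le (n : ℕ) {p q : ℝ} (hp : 0 < p) (hq : 0 ≤ q) (hpq : p + q = 1) :
    ∑ k ∈ Finset.range (n + 1), ((n.choose k : ℝ)) * p ^ k * q ^ (n - k) * (1 / (k + 1))
      ≤ 1 / ((n + 1) * p) := by
  rw [le_div_iff₀ (by positivity), Finset.sum_mul]
  have key : ∀ k ∈ Finset.range (n + 1),
      ((n.choose k : ℝ)) * p ^ k * q ^ (n - k) * (1 / (k + 1)) * ((n + 1) * p)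
        = (((n+1).choose (k+1) : ℝ)) * p ^ (k+1) * q ^ (n + 1 - (k+1)) := by
    intro k hk
    have h := Nat.add_one_mul_choose_eq n k
    have h' : ((n : ℝ) + 1) * (n.choose k : ℝ) = ((n+1).choose (k+1) : ℝ) * ((k : ℝ) + 1) := by
      exact_mod_cast congrArg (Nat.cast (R := ℝ)) h
    have hnk : n + 1 - (k + 1) = n - k := by omega
    rw [hnk]
    have hk1 : ((k : ℝ) + 1) ≠ 0 := by positivity
    field_simp
    linear_combination (p ^ (k + 1) * q ^ (n - k)) * h'
  rw [Finset.sum_congr rfl key]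
  have h1 : ∑ k ∈ Finset.range (n + 2),
      (((n+1).choose k : ℝ)) * p ^ k * q ^ (n + 1 - k) = 1 := sum_binom_total (n+1) p q hpq
  rw [Finset.sum_range_succ'
    (fun k => (((n+1).choose k : ℝ)) * p ^ k * q ^ (n + 1 - k)) (n+1)] at h1
  have h0 : 0 ≤ (((n+1).choose 0 : ℝ)) * p ^ 0 * q ^ (n + 1 - 0) := by positivity
  linarith

lemma sum_binom_div2_le (n : ℕ) {p q : ℝ} (hp : 0 < p) (hq : 0 ≤ q) (hpq : p + q = 1) :
    ∑ k ∈ Finset.range (n + 1),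
        ((n.choose k : ℝ)) * p ^ k * q ^ (n - k) * (1 / ((k + 1) * (k + 2)))
      ≤ 1 / ((n + 1) * (n + 2) * p ^ 2) := by
  rw [le_div_iff₀ (by positivity), Finset.sum_mul]
  have key : ∀ k ∈ Finset.range (n + 1),
      ((n.choose k : ℝ)) * p ^ k * q ^ (n - k) * (1 / ((k + 1) * (k + 2))) * ((n + 1) * (n + 2) * p ^ 2)
        = (((n+2).choose (k+2) : ℝ)) * p ^ (k+2) * q ^ (n + 2 - (k+2)) := by
    intro k hk
    have h1 := Nat.add_one_mul_choose_eq n k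
    have h2 := Nat.add_one_mul_choose_eq (n+1) (k+1)
    have h1' : ((n : ℝ) + 1) * (n.choose k : ℝ) = ((n+1).choose (k+1) : ℝ) * ((k : ℝ) + 1) := by
      exact_mod_cast congrArg (Nat.cast (R := ℝ)) h1
    have h2' : ((n : ℝ) + 2) * ((n+1).choose (k+1) : ℝ) = ((n+2).choose (k+2) : ℝ) * ((k : ℝ) + 2) := by
      exact_mod_cast congrArg (Nat.cast (R := ℝ)) h2
    have hnk : n + 2 - (k + 2) = n - k := by omega
    rw [hnk]
    have hk1 : ((k : ℝ) + 1) ≠ 0 := by positivity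
    have hk2 : ((k : ℝ) + 2) ≠ 0 := by positivity
    field_simp
    linear_combination (((n : ℝ) + 2) * p ^ (k + 2) * q ^ (n - k)) * h1'
      + (((k : ℝ) + 1) * p ^ (k + 2) * q ^ (n - k)) * h2'
  rw [Finset.sum_congr rfl key]
  have h1 : ∑ k ∈ Finset.range (n + 3),
      (((n+2).choose k : ℝ)) * p ^ k * q ^ (n + 2 - k) = 1 := sum_binom_total (n+2) p q hpq
  rw [Finset.sum_range_succ'
    (fun k => (((n+2).choose k : ℝ)) * p ^ k * q ^ (n + 2 - k)) (n+2)] at h1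
  rw [Finset.sum_range_succ'
    (fun k => (((n+2).choose (k+1) : ℝ)) * p ^ (k+1) * q ^ (n + 2 - (k+1))) (n+1)] at h1
  have h0 : 0 ≤ (((n+2).choose 0 : ℝ)) * p ^ 0 * q ^ (n + 2 - 0) := by positivity
  have h0' : 0 ≤ (((n+2).choose (0+1) : ℝ)) * p ^ (0+1) * q ^ (n + 2 - (0+1)) := by positivity
  linarith

lemma gcnt_le1 (n k : ℕ) :
    (if 0 < k then (n : ℝ) / k else 0) ≤ 2 * n * (1 / (k + 1)) := by
  rcases Nat.eq_zero_or_pos k with h | h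
  · subst h; simp
  · rw [if_pos h]
    have hk : (1 : ℝ) ≤ (k : ℝ) := by exact_mod_cast h
    have hk0 : (0 : ℝ) < (k : ℝ) := by linarith
    have e : 2 * (n : ℝ) * (1 / ((k : ℝ) + 1)) = 2 * (n : ℝ) / ((k : ℝ) + 1) := by ring
    rw [e, div_le_div_iff₀ hk0 (by linarith)]
    nlinarith [mul_le_mul_of_nonneg_left hk (by positivity : (0:ℝ) ≤ (n : ℝ))]

lemma gcnt_le2 (n k : ℕ) :
    (if 0 < k then (n : ℝ) / k else 0)
      ≤ (n : ℝ) * (1 / (k + 1)) + 3 * n * (1 / ((k + 1) * (k + 2))) := by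
  rcases Nat.eq_zero_or_pos k with h | h
  · subst h; simp; positivity
  · rw [if_pos h]
    have hk : (1 : ℝ) ≤ (k : ℝ) := by exact_mod_cast h
    have hk0 : (0 : ℝ) < (k : ℝ) := by linarith
    have e : (n : ℝ) * (1 / ((k : ℝ) + 1)) + 3 * n * (1 / (((k : ℝ) + 1) * ((k : ℝ) + 2)))
        = ((n : ℝ) * ((k : ℝ) + 2) + 3 * n) / (((k : ℝ) + 1) * ((k : ℝ) + 2)) := by
      field_simp
    rw [e, div_le_div_iff₀ hk0 (by positivity)]
    nlinarith [mul_le_mul_of_nonneg_left hk (by positivity : (0:ℝ) ≤ (n : ℝ))]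


lemma delta_bounds {K : ℕ} (n : ℕ) (hn : 1 ≤ n) (πD : Fin K → ℝ)
    (h0 : ∀ a, 0 < πD a) (h1 : ∑ a, πD a = 1) (a : Fin K) :
    (∫ d, ((if 0 < cntA n d a then (n : ℝ) / (cntA n d a : ℝ) else 0) - 1 / πD a)
        ∂(actionData n πD)) ≤ 1 / πD a ∧
    (∫ d, ((if 0 < cntA n d a then (n : ℝ) / (cntA n d a : ℝ) else 0) - 1 / πD a)
        ∂(actionData n πD)) ≤ 3 / (n * (πD a) ^ 2) := by
  have hn' : (1 : ℝ) ≤ (n : ℝ) := by exact_mod_cast hn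
  set p := πD a with hpdef
  set q := ∑ b ∈ Finset.univ.erase a, πD b with hqdef
  have hppos : 0 < p := h0 a
  have hq : 0 ≤ q := Finset.sum_nonneg fun b _ => (h0 b).le
  have hpq : p + q = 1 := by
    rw [hpdef, hqdef, Finset.add_sum_erase _ _ (Finset.mem_univ a)]; exact h1
  have hint : (∫ d, ((if 0 < cntA n d a then (n : ℝ) / (cntA n d a : ℝ) else 0) - 1 / p)
        ∂(actionData n πD))
      = ∑ k ∈ Finset.range (n+1), ((n.choose k : ℝ)) * p ^ k * q ^ (n-k)
          * ((if 0 < k then (n : ℝ) / k else 0) - 1 / p) := by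
    rw [integral_actionData πD (fun b => (h0 b).le)]
    exact sum_prod_count πD a n (fun k => (if 0 < k then (n : ℝ) / k else 0) - 1 / p)
  have hsum1 : ∑ k ∈ Finset.range (n+1), ((n.choose k : ℝ)) * p ^ k * q ^ (n-k) = 1 :=
    sum_binom_total n p q hpq
  have hsplit : ∑ k ∈ Finset.range (n+1), ((n.choose k : ℝ)) * p ^ k * q ^ (n-k)
          * ((if 0 < k then (n : ℝ) / k else 0) - 1 / p)
      = (∑ k ∈ Finset.range (n+1), ((n.choose k : ℝ)) * p ^ k * q ^ (n-k)
          * (if 0 < k then (n : ℝ) / k else 0)) - 1 / p := by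
    simp only [mul_sub]
    rw [Finset.sum_sub_distrib, ← Finset.sum_mul, hsum1, one_mul]
  have hBnn : ∀ k ∈ Finset.range (n+1), 0 ≤ ((n.choose k : ℝ)) * p ^ k * q ^ (n-k) :=
    fun k _ => by positivity
  constructor
  · -- bound 1
    have step : ∑ k ∈ Finset.range (n+1), ((n.choose k : ℝ)) * p ^ k * q ^ (n-k)
          * (if 0 < k then (n : ℝ) / k else 0)
        ≤ 2 * (n : ℝ) * (1 / (((n : ℝ) + 1) * p)) := by
      calc ∑ k ∈ Finset.range (n+1), ((n.choose k : ℝ)) * p ^ k * q ^ (n-k)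
            * (if 0 < k then (n : ℝ) / k else 0)
          ≤ ∑ k ∈ Finset.range (n+1), ((n.choose k : ℝ)) * p ^ k * q ^ (n-k)
            * (2 * (n : ℝ) * (1 / ((k : ℝ) + 1))) :=
            Finset.sum_le_sum fun k hk =>
              mul_le_mul_of_nonneg_left (gcnt_le1 n k) (hBnn k hk)
        _ = 2 * (n : ℝ) * ∑ k ∈ Finset.range (n+1),
              ((n.choose k : ℝ)) * p ^ k * q ^ (n-k) * (1 / ((k : ℝ) + 1)) := by
            rw [Finset.mul_sum]; exact Finset.sum_congr rfl fun k _ => by ring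
        _ ≤ 2 * (n : ℝ) * (1 / (((n : ℝ) + 1) * p)) := by
            have := sum_binom_div_le n hppos hq hpq
            have h2n : (0:ℝ) ≤ 2 * (n : ℝ) := by positivity
            exact mul_le_mul_of_nonneg_left this h2n
    have key : 2 * (n : ℝ) * (1 / (((n : ℝ) + 1) * p)) ≤ 2 / p := by
      rw [mul_one_div, div_le_div_iff₀ (by positivity) hppos]
      nlinarith
    rw [hint, hsplit]
    have : 2 / p - 1 / p = 1 / p := by ring
    linarith
  · -- bound 2
    have step : ∑ k ∈ Finset.range (n+1), ((n.choose k : ℝ)) * p ^ k * q ^ (n-k)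
          * (if 0 < k then (n : ℝ) / k else 0)
        ≤ (n : ℝ) * (1 / (((n : ℝ) + 1) * p))
          + 3 * (n : ℝ) * (1 / ((((n : ℝ) + 1) * ((n : ℝ) + 2)) * p ^ 2)) := by
      calc ∑ k ∈ Finset.range (n+1), ((n.choose k : ℝ)) * p ^ k * q ^ (n-k)
            * (if 0 < k then (n : ℝ) / k else 0)
          ≤ ∑ k ∈ Finset.range (n+1), ((n.choose k : ℝ)) * p ^ k * q ^ (n-k)
            * ((n : ℝ) * (1 / ((k : ℝ) + 1)) + 3 * (n : ℝ) * (1 / (((k : ℝ) + 1) * ((k : ℝ) + 2)))) :=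
            Finset.sum_le_sum fun k hk =>
              mul_le_mul_of_nonneg_left (gcnt_le2 n k) (hBnn k hk)
        _ = (n : ℝ) * (∑ k ∈ Finset.range (n+1),
              ((n.choose k : ℝ)) * p ^ k * q ^ (n-k) * (1 / ((k : ℝ) + 1)))
            + 3 * (n : ℝ) * (∑ k ∈ Finset.range (n+1),
              ((n.choose k : ℝ)) * p ^ k * q ^ (n-k) * (1 / (((k : ℝ) + 1) * ((k : ℝ) + 2)))) := by
            rw [Finset.mul_sum, Finset.mul_sum, ← Finset.sum_add_distrib]
            exact Finset.sum_congr rfl fun k _ => by ring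
        _ ≤ (n : ℝ) * (1 / (((n : ℝ) + 1) * p))
            + 3 * (n : ℝ) * (1 / ((((n : ℝ) + 1) * ((n : ℝ) + 2)) * p ^ 2)) := by
            have i1 := sum_binom_div_le n hppos hq hpq
            have i2 := sum_binom_div2_le n hppos hq hpq
            have hn0 : (0:ℝ) ≤ (n : ℝ) := by positivity
            have h3n : (0:ℝ) ≤ 3 * (n : ℝ) := by positivity
            have := mul_le_mul_of_nonneg_left i1 hn0
            have := mul_le_mul_of_nonneg_left i2 h3n
            linarith
    have key1 : (n : ℝ) * (1 / (((n : ℝ) + 1) * p)) ≤ 1 / p := by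
      rw [mul_one_div, div_le_div_iff₀ (by positivity) hppos]
      nlinarith
    have key2 : 3 * (n : ℝ) * (1 / ((((n : ℝ) + 1) * ((n : ℝ) + 2)) * p ^ 2))
        ≤ 3 / ((n : ℝ) * p ^ 2) := by
      rw [mul_one_div, div_le_div_iff₀ (by positivity) (by positivity)]
      nlinarith [sq_nonneg p, mul_pos hppos hppos]
    rw [hint, hsplit]
    linarith


/-- bounds on
`V_{3,n} = Σ_a E[1{n(a)>0}·n/n(a) − 1/π_D(a)] π(a)² σ²_Φ(a)` in terms of
`V₁ = Σ_a π(a)² σ²_Φ(a)/π_D(a)`: always `V_{3,n} ≤ 4V₁`, and if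
`n·π_D^* ≥ 34` (where `π_D^* = min_a π_D(a)`) then
`V_{3,n} ≤ 2V₁·√(2/(n π_D^*))·(√((3/2) ln(n π_D^*/2)) + 1)`. -/
theorem V3_bounds {K : ℕ} (n : ℕ) (hn : 1 ≤ n)
    (π πD : Fin K → ℝ) (hπ : IsPolicy π) (hπD : IsBehaviorPolicy πD)
    (σ2 : Fin K → ℝ) (hσ : ∀ a, 0 ≤ σ2 a) :
    (∑ a, (∫ d, ((if 0 < cntA n d a then (n : ℝ) / (cntA n d a : ℝ) else 0) - 1 / πD a)
          ∂(actionData n πD)) * (π a ^ 2 * σ2 a)) ≤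
        4 * ∑ a, π a ^ 2 * σ2 a / πD a ∧
    ((34 : ℝ) ≤ (n : ℝ) * (⨅ a, πD a) →
      (∑ a, (∫ d, ((if 0 < cntA n d a then (n : ℝ) / (cntA n d a : ℝ) else 0) - 1 / πD a)
            ∂(actionData n πD)) * (π a ^ 2 * σ2 a)) ≤
        2 * (∑ a, π a ^ 2 * σ2 a / πD a) * Real.sqrt (2 / ((n : ℝ) * (⨅ a, πD a))) *
          (Real.sqrt ((3 / 2) * Real.log ((n : ℝ) * (⨅ a, πD a) / 2)) + 1)) := by
  obtain ⟨hD0, hD1⟩ := hπD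
  have hn' : (1 : ℝ) ≤ (n : ℝ) := by exact_mod_cast hn
  have hc : ∀ a, 0 ≤ π a ^ 2 * σ2 a := fun a => mul_nonneg (sq_nonneg _) (hσ a)
  have hV1 : 0 ≤ ∑ a, π a ^ 2 * σ2 a / πD a :=
    Finset.sum_nonneg fun a _ => div_nonneg (hc a) (hD0 a).le
  have hΔ := fun a => delta_bounds n hn πD hD0 hD1 a
  constructor
  · calc (∑ a, (∫ d, ((if 0 < cntA n d a then (n : ℝ) / (cntA n d a : ℝ) else 0) - 1 / πD a)
          ∂(actionData n πD)) * (π a ^ 2 * σ2 a))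
        ≤ ∑ a, (1 / πD a) * (π a ^ 2 * σ2 a) :=
          Finset.sum_le_sum fun a _ => mul_le_mul_of_nonneg_right (hΔ a).1 (hc a)
      _ = ∑ a, π a ^ 2 * σ2 a / πD a :=
          Finset.sum_congr rfl fun a _ => by ring
      _ ≤ 4 * ∑ a, π a ^ 2 * σ2 a / πD a := by linarith
  · intro h34
    have hK : Nonempty (Fin K) := by
      rcases Nat.eq_zero_or_pos K with h | h
      · exfalso; subst h; simp at hD1
      · exact ⟨⟨0, h⟩⟩
    set ps := ⨅ a, πD a with hpsdef
    have hbdd : BddBelow (Set.range πD) := (Set.finite_range πD).bddBelow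
    have hps_le : ∀ a, ps ≤ πD a := fun a => ciInf_le hbdd a
    have hps_pos : 0 < ps := by
      obtain ⟨a₀, ha₀⟩ := Finite.exists_min πD
      exact lt_of_lt_of_le (hD0 a₀) (le_ciInf ha₀)
    set m := (n : ℝ) * ps with hm
    have hm34 : (34 : ℝ) ≤ m := h34
    have hmpos : (0 : ℝ) < m := by linarith
    have step : ∀ a, (∫ d, ((if 0 < cntA n d a then (n : ℝ) / (cntA n d a : ℝ) else 0) - 1 / πD a)
          ∂(actionData n πD)) * (π a ^ 2 * σ2 a)
        ≤ (3 / m) * (π a ^ 2 * σ2 a / πD a) := by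
      intro a
      have h1 : _ ≤ (3 / ((n : ℝ) * (πD a) ^ 2)) * (π a ^ 2 * σ2 a) :=
        mul_le_mul_of_nonneg_right (hΔ a).2 (hc a)
      refine le_trans h1 ?_
      have hpa := hD0 a
      have e1 : (3 / ((n : ℝ) * (πD a) ^ 2)) * (π a ^ 2 * σ2 a)
          = (3 / ((n : ℝ) * πD a)) * (π a ^ 2 * σ2 a / πD a) := by
        ring
      rw [e1]
      have h2 : 3 / ((n : ℝ) * πD a) ≤ 3 / m := by
        apply div_le_div_of_nonneg_left (by norm_num) hmpos
        rw [hm]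
        have := hps_le a
        nlinarith
      exact mul_le_mul_of_nonneg_right h2 (div_nonneg (hc a) hpa.le)
    have hL : 0 ≤ Real.sqrt ((3 / 2) * Real.log (m / 2)) := Real.sqrt_nonneg _
    have hs2m : 0 ≤ Real.sqrt (2 / m) := Real.sqrt_nonneg _
    have hnum : 3 / m ≤ 2 * Real.sqrt (2 / m) := by
      have e2 : 2 * Real.sqrt (2 / m) = Real.sqrt (8 / m) := by
        rw [show (8 : ℝ) / m = 2 ^ 2 * (2 / m) by ring, Real.sqrt_mul (by positivity),
          Real.sqrt_sq (by norm_num : (0:ℝ) ≤ 2)]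
      rw [e2]
      rw [show (3 : ℝ) / m = Real.sqrt ((3 / m) ^ 2) from (Real.sqrt_sq (by positivity)).symm]
      apply Real.sqrt_le_sqrt
      rw [div_pow, div_le_div_iff₀ (by positivity) hmpos]
      nlinarith
    have hnum2 : 3 / m ≤ 2 * Real.sqrt (2 / m) * (Real.sqrt ((3 / 2) * Real.log (m / 2)) + 1) := by
      nlinarith
    calc (∑ a, (∫ d, ((if 0 < cntA n d a then (n : ℝ) / (cntA n d a : ℝ) else 0) - 1 / πD a)
          ∂(actionData n πD)) * (π a ^ 2 * σ2 a))
        ≤ ∑ a, (3 / m) * (π a ^ 2 * σ2 a / πD a) := Finset.sum_le_sum fun a _ => step a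
      _ = (3 / m) * ∑ a, π a ^ 2 * σ2 a / πD a := by rw [Finset.mul_sum]
      _ ≤ (2 * Real.sqrt (2 / m) * (Real.sqrt ((3 / 2) * Real.log (m / 2)) + 1))
            * ∑ a, π a ^ 2 * σ2 a / πD a := mul_le_mul_of_nonneg_right hnum2 hV1
      _ = 2 * (∑ a, π a ^ 2 * σ2 a / πD a) * Real.sqrt (2 / m) *
            (Real.sqrt ((3 / 2) * Real.log (m / 2)) + 1) := by ring

end OffPolicy
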